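/- Inductive step of Theorem 1. Fix k ∈ ℕ and suppose that p(s',k) ≤ v̂(ŝ',k) for every abstract state ŝ' ∈ Ŝ and every concrete state s' ∈ ŝ'. Then for every abstract state ŝ ∈ Ŝ and every s ∈ ŝ, p(s,k+1) ≤ v̂(ŝ,k+1). -/
import Mathlib


/-- Inductive step of Theorem 1: if the bound holds at horizon k for all abstract
states and contained concrete states, then it holds at horizon k + 1. -/
theorem imdp_abstraction_sound_inductive_step
    {S : Type*} {A : Type*} [Fintype A] [Nonempty A]
    (E : S → A → S) (π : S → A → ℝ) (F : Set S)
    (hπ_nonneg : ∀ s a, 0 ≤ π s a)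
    (hπ_sum : ∀ s, ∑ a, π s a = 1)
    -- the k-step failure probability of the concrete model
    (p : S → ℕ → ℝ)
    (hp_fail : ∀ s k, s ∈ F → p s k = 1)
    (hp_zero : ∀ s, s ∉ F → p s 0 = 0)
    (hp_succ : ∀ s k, s ∉ F → p s (k + 1) = ∑ a, π s a * p (E s a) k)
    -- the IMDP abstraction: a finite set of abstract states, each a subset of S
    {Shat : Type*} [Fintype Shat]
    (conc : Shat → Set S)
    -- each abstract state is equipped with a finite nonempty family of pieces
    (J : Shat → Type*) [∀ sh, Fintype (J sh)] [∀ sh, Nonempty (J sh)]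
    (piece : (sh : Shat) → J sh → Set S)
    (hcover : ∀ sh, conc sh ⊆ ⋃ j, piece sh j)
    -- environment abstraction
    (Ehat : (sh : Shat) → J sh → A → Shat)
    (hEhat : ∀ sh (j : J sh) (a : A) (s : S), s ∈ piece sh j → E s a ∈ conc (Ehat sh j a))
    -- policy upper bounds
    (πU : (sh : Shat) → J sh → A → ℝ)
    (hπU_nonneg : ∀ sh (j : J sh) (a : A), 0 ≤ πU sh j a)
    (hπU : ∀ sh (j : J sh) (a : A) (s : S), s ∈ piece sh j → π s a ≤ πU sh j a)
    -- fail labelling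
    (failLab : Shat → Prop)
    (hfail : ∀ sh, (conc sh ∩ F).Nonempty → failLab sh)
    -- the abstract value
    (vhat : Shat → ℕ → ℝ)
    (hv_fail : ∀ sh k, failLab sh → vhat sh k = 1)
    (hv_zero : ∀ sh, ¬ failLab sh → vhat sh 0 = 0)
    (hv_succ : ∀ sh k, ¬ failLab sh →
      vhat sh (k + 1) =
        Finset.univ.sup' Finset.univ_nonempty
          (fun j : J sh => ∑ a, πU sh j a * vhat (Ehat sh j a) k))
    (k : ℕ)
    (ih : ∀ (sh' : Shat) (s' : S), s' ∈ conc sh' → p s' k ≤ vhat sh' k) :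
    ∀ (sh : Shat) (s : S), s ∈ conc sh → p s (k + 1) ≤ vhat sh (k + 1) := by
  -- auxiliary: p is in [0,1]
  have hbounds : ∀ n (s : S), 0 ≤ p s n ∧ p s n ≤ 1 := by
    intro n
    induction n with
    | zero =>
      intro s
      by_cases hs : s ∈ F
      · rw [hp_fail s 0 hs]; constructor <;> norm_num
      · rw [hp_zero s hs]; constructor <;> norm_num
    | succ n ihn =>
      intro s
      by_cases hs : s ∈ F
      · rw [hp_fail s (n+1) hs]; constructor <;> norm_num
      · rw [hp_succ s n hs]
        constructor
        · apply Finset.sum_nonneg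
          intro a _
          exact mul_nonneg (hπ_nonneg s a) (ihn (E s a)).1
        · calc ∑ a, π s a * p (E s a) n ≤ ∑ a, π s a := by
                apply Finset.sum_le_sum
                intro a _
                nlinarith [(ihn (E s a)).1, (ihn (E s a)).2, hπ_nonneg s a]
            _ = 1 := hπ_sum s
  intro sh s hs
  by_cases hfl : failLab sh
  · rw [hv_fail sh (k+1) hfl]
    exact (hbounds (k+1) s).2
  · have hsF : s ∉ F := by
      intro hsF
      exact hfl (hfail sh ⟨s, hs, hsF⟩)
    rw [hp_succ s k hsF, hv_succ sh k hfl]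
    obtain ⟨_, ⟨j, rfl⟩, hj⟩ := hcover sh hs
    apply Finset.le_sup'_of_le _ (Finset.mem_univ j)
    apply Finset.sum_le_sum
    intro a _
    calc π s a * p (E s a) k ≤ πU sh j a * p (E s a) k :=
          mul_le_mul_of_nonneg_right (hπU sh j a s hj) (hbounds k (E s a)).1
      _ ≤ πU sh j a * vhat (Ehat sh j a) k :=
          mul_le_mul_of_nonneg_left (ih _ _ (hEhat sh j a s hj)) (hπU_nonneg sh j a)
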